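/- (Key Lemma) Let F : 𝔻 → Ω_n be holomorphic, let λ_1,…,λ_s be the distinct eigenvalues of F(0), and let m(j) be the multiplicity of (λ − λ_j) in the minimal polynomial of F(0). Define the Blaschke product B(ζ) = ∏_{j=1}^s ((ζ − λ_j)/(1 − conj(λ_j)ζ))^{m(j)}. Then for every ζ ∈ 𝔻 and every eigenvalue λ of F(ζ), one has |B(λ)| ≤ |ζ|. -/

import Mathlib

open Metric Polynomial Finset
open scoped NNReal Pointwise

/-- The spectral radius of a complex `n × n` matrix. -/
noncomputable def sRad {n : ℕ} (A : Matrix (Fin n) (Fin n) ℂ) : ℝ :=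
  sSup ((fun μ => ‖μ‖) '' spectrum ℂ A)

namespace Stmt9Aux

variable {n : ℕ}

local notation "𝔻" => ball (0:ℂ) 1

lemma mem_spec_iff_root (N : Matrix (Fin n) (Fin n) ℂ) (μ : ℂ) :
    μ ∈ spectrum ℂ N ↔ N.charpoly.IsRoot μ := by
  have hmap : (Matrix.charmatrix N).map (Polynomial.eval μ) =
      Matrix.diagonal (fun _ => μ) - N := by
    ext i j
    by_cases h : i = j
    · subst h
      simp [Matrix.charmatrix_apply_eq, Matrix.diagonal_apply_eq]
    · simp [Matrix.charmatrix_apply_ne _ _ _ h, Matrix.diagonal_apply_ne _ h]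
  have heval : N.charpoly.eval μ = (Matrix.diagonal (fun _ => μ) - N).det := by
    rw [Matrix.charpoly, eval_det, ← hmap]
    congr 1
    ext i j
    rw [matPolyEquiv_eval, Matrix.map_apply]
  have halg : algebraMap ℂ (Matrix (Fin n) (Fin n) ℂ) μ = Matrix.diagonal (fun _ => μ) := by
    ext i j
    by_cases h : i = j <;>
      simp [Matrix.algebraMap_matrix_apply, h]
  rw [spectrum.mem_iff, halg, IsRoot, heval]
  rw [Matrix.isUnit_iff_isUnit_det, isUnit_iff_ne_zero, not_not]

lemma spec_nonempty (hn : 0 < n) (N : Matrix (Fin n) (Fin n) ℂ) :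
    (spectrum ℂ N).Nonempty := by
  have hdeg : 0 < N.charpoly.degree := by
    rw [Polynomial.degree_eq_natDegree N.charpoly_monic.ne_zero]
    rw [Matrix.charpoly_natDegree_eq_dim]
    exact_mod_cast by simpa using hn
  obtain ⟨μ, hμ⟩ := Complex.exists_root hdeg
  exact ⟨μ, (mem_spec_iff_root N μ).mpr hμ⟩

lemma blaschke_denom_ne {μ α : ℂ} (hμ : ‖μ‖ < 1) (hα : ‖α‖ < 1) :
    1 - (starRingEnd ℂ) μ * α ≠ 0 := by
  intro h
  have h1 : (1 : ℂ) = (starRingEnd ℂ) μ * α := by linear_combination h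
  have : ‖(starRingEnd ℂ) μ * α‖ < 1 := by
    rw [norm_mul, RCLike.norm_conj]
    calc ‖μ‖ * ‖α‖ ≤ 1 * ‖α‖ := by
          exact mul_le_mul_of_nonneg_right hμ.le (norm_nonneg _)
      _ = ‖α‖ := one_mul _
      _ < 1 := hα
  rw [← h1] at this
  simp at this

lemma blaschke_num_le_denom {μ α : ℂ} (hμ : ‖μ‖ < 1) (hα : ‖α‖ < 1) :
    ‖α - μ‖ ≤ ‖1 - (starRingEnd ℂ) μ * α‖ := by
  have key : Complex.normSq (1 - (starRingEnd ℂ) μ * α) - Complex.normSq (α - μ)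
      = (1 - Complex.normSq μ) * (1 - Complex.normSq α) := by
    have h1 := Complex.mul_conj (1 - (starRingEnd ℂ) μ * α)
    have h2 := Complex.mul_conj (α - μ)
    have h3 := Complex.mul_conj μ
    have h4 := Complex.mul_conj α
    have : ((Complex.normSq (1 - (starRingEnd ℂ) μ * α) - Complex.normSq (α - μ) : ℝ) : ℂ)
        = (((1 - Complex.normSq μ) * (1 - Complex.normSq α) : ℝ) : ℂ) := by
      push_cast
      rw [← h1, ← h2, ← h3, ← h4]
      simp only [map_sub, map_mul, map_one, Complex.conj_conj]
      ring
    exact_mod_cast this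
  have hμ' : Complex.normSq μ < 1 := by
    rw [Complex.normSq_eq_norm_sq]
    nlinarith [norm_nonneg μ]
  have hα' : Complex.normSq α < 1 := by
    rw [Complex.normSq_eq_norm_sq]
    nlinarith [norm_nonneg α]
  have hpos : 0 ≤ Complex.normSq (1 - (starRingEnd ℂ) μ * α) - Complex.normSq (α - μ) := by
    rw [key]; nlinarith
  have : Complex.normSq (α - μ) ≤ Complex.normSq (1 - (starRingEnd ℂ) μ * α) := by linarith
  calc ‖α - μ‖ = Real.sqrt (Complex.normSq (α - μ)) := by
        rw [Complex.norm_def]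
    _ ≤ Real.sqrt (Complex.normSq (1 - (starRingEnd ℂ) μ * α)) := Real.sqrt_le_sqrt this
    _ = ‖1 - (starRingEnd ℂ) μ * α‖ := by rw [Complex.norm_def]

/-- root bound for monic polynomials with bounded coefficients -/

lemma root_norm_le {p : ℂ[X]} (hp : p.Monic) {α : ℂ} (hr : p.IsRoot α) {C : ℝ}
    (hC : ∀ k < p.natDegree, ‖p.coeff k‖ ≤ C) :
    ‖α‖ ≤ max 1 (p.natDegree * C) := by
  rcases le_or_gt ‖α‖ 1 with h | h
  · exact le_trans h (le_max_left _ _)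
  refine le_trans ?_ (le_max_right _ _)
  set d := p.natDegree with hd
  have hd1 : 1 ≤ d := by
    by_contra hcon
    push_neg at hcon
    interval_cases d
    · have hp1 : p = 1 := hp.natDegree_eq_zero.mp hd.symm
      rw [hp1] at hr
      simp [Polynomial.IsRoot] at hr
  have hαpos : (0:ℝ) < ‖α‖ := by linarith
  have heval : (0:ℂ) = ∑ k ∈ Finset.range (d+1), p.coeff k * α ^ k := by
    rw [← Polynomial.eval_eq_sum_range]
    exact hr.symm
  rw [Finset.sum_range_succ] at heval
  have hlead : p.coeff d = 1 := hp.coeff_natDegree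
  have hαd : α ^ d = -∑ k ∈ Finset.range d, p.coeff k * α ^ k := by
    rw [hlead] at heval
    linear_combination -heval
  have hnorm : ‖α‖ ^ d ≤ d * C * ‖α‖ ^ (d - 1) := by
    calc ‖α‖ ^ d = ‖α ^ d‖ := (norm_pow _ _).symm
      _ = ‖∑ k ∈ Finset.range d, p.coeff k * α ^ k‖ := by rw [hαd, norm_neg]
      _ ≤ ∑ k ∈ Finset.range d, ‖p.coeff k * α ^ k‖ := norm_sum_le _ _
      _ ≤ ∑ k ∈ Finset.range d, C * ‖α‖ ^ (d-1) := by
          refine Finset.sum_le_sum fun k hk => ?_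
          rw [Finset.mem_range] at hk
          rw [norm_mul, norm_pow]
          have h1 : ‖p.coeff k‖ ≤ C := hC k hk
          have h2 : ‖α‖ ^ k ≤ ‖α‖ ^ (d-1) := by
            apply pow_le_pow_right₀ h.le
            omega
          have hCnn : (0:ℝ) ≤ C := le_trans (norm_nonneg _) h1
          exact mul_le_mul h1 h2 (by positivity) hCnn
      _ = d * C * ‖α‖ ^ (d-1) := by
          rw [Finset.sum_const, Finset.card_range]
          ring
  have hsplit : ‖α‖ ^ d = ‖α‖ * ‖α‖ ^ (d - 1) := by
    rw [← pow_succ']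
    congr 1
    omega
  rw [hsplit] at hnorm
  have hppos : (0:ℝ) < ‖α‖ ^ (d-1) := by positivity
  exact le_of_mul_le_mul_right hnorm hppos

lemma hd_pow {M : ℂ → Matrix (Fin n) (Fin n) ℂ}
    (h : ∀ i j, DifferentiableOn ℂ (fun ζ => M ζ i j) 𝔻) (k : ℕ) :
    ∀ i j, DifferentiableOn ℂ (fun ζ => (M ζ ^ k) i j) 𝔻 := by
  induction k with
  | zero =>
    intro i j
    simp only [pow_zero, Matrix.one_apply]
    by_cases hij : i = j <;> simp [hij, differentiableOn_const]
  | succ k ih =>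
    intro i j
    simp only [pow_succ, Matrix.mul_apply]
    exact DifferentiableOn.fun_sum fun l _ => (ih i l).mul (h l j)

lemma hd_coeff_prod (w : Fin n → ℂ[X]) {c : ℂ → Fin n → ℂ}
    (hc : ∀ i, DifferentiableOn ℂ (fun ζ => c ζ i) 𝔻) (j : ℕ) :
    DifferentiableOn ℂ (fun ζ => (∏ i, (w i + C (c ζ i))).coeff j) 𝔻 := by
  have key : ∀ ζ, (∏ i, (w i + C (c ζ i))).coeff j =
      ∑ S ∈ (univ : Finset (Fin n)).powerset,
        (∏ i ∈ S, w i).coeff j * ∏ i ∈ univ \ S, c ζ i := by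
    intro ζ
    rw [Finset.prod_add, finset_sum_coeff]
    refine Finset.sum_congr rfl fun S _ => ?_
    rw [← map_prod (C : ℂ →+* ℂ[X]), coeff_mul_C]
  simp only [key]
  exact DifferentiableOn.fun_sum fun S _ =>
    ((DifferentiableOn.fun_finset_prod fun i _ => hc i).const_mul _)

lemma hd_charpoly_coeff {M : ℂ → Matrix (Fin n) (Fin n) ℂ}
    (h : ∀ i j, DifferentiableOn ℂ (fun ζ => M ζ i j) 𝔻) (j : ℕ) :
    DifferentiableOn ℂ (fun ζ => (M ζ).charpoly.coeff j) 𝔻 := by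
  have hrep : ∀ ζ, (M ζ).charpoly.coeff j =
      ∑ σ : Equiv.Perm (Fin n), ((Equiv.Perm.sign σ : ℤ) : ℂ) *
        (∏ i, ((if σ i = i then (X : ℂ[X]) else 0) + C (-(M ζ (σ i) i)))).coeff j := by
    intro ζ
    rw [Matrix.charpoly, Matrix.det_apply, finset_sum_coeff]
    refine Finset.sum_congr rfl fun σ _ => ?_
    have hprod : ∏ i, (Matrix.charmatrix (M ζ)) (σ i) i =
        ∏ i, ((if σ i = i then (X : ℂ[X]) else 0) + C (-(M ζ (σ i) i))) := by
      refine Finset.prod_congr rfl fun i _ => ?_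
      by_cases hi : σ i = i
      · rw [if_pos hi, hi, Matrix.charmatrix_apply_eq, map_neg, sub_eq_add_neg]
      · simp [if_neg hi, Matrix.charmatrix_apply_ne _ _ _ hi]
    rw [hprod, Units.smul_def, Polynomial.coeff_smul, zsmul_eq_mul]
  simp only [hrep]
  exact DifferentiableOn.fun_sum fun σ _ =>
    (hd_coeff_prod _ (fun i => (h (σ i) i).neg) j).const_mul _

lemma hd_det {M : ℂ → Matrix (Fin n) (Fin n) ℂ}
    (h : ∀ i j, DifferentiableOn ℂ (fun ζ => M ζ i j) 𝔻) :
    DifferentiableOn ℂ (fun ζ => (M ζ).det) 𝔻 := by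
  simp only [Matrix.det_apply, Units.smul_def, zsmul_eq_mul]
  exact DifferentiableOn.fun_sum fun σ _ =>
    (DifferentiableOn.fun_finset_prod fun i _ => h (σ i) i).const_mul _

lemma hd_adjugate {M : ℂ → Matrix (Fin n) (Fin n) ℂ}
    (h : ∀ i j, DifferentiableOn ℂ (fun ζ => M ζ i j) 𝔻) :
    ∀ i j, DifferentiableOn ℂ (fun ζ => (M ζ).adjugate i j) 𝔻 := by
  intro i j
  simp only [Matrix.adjugate_apply]
  refine hd_det fun k l => ?_
  simp only [Matrix.updateRow_apply]
  by_cases hk : k = j <;> simp [hk, differentiableOn_const, h]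

lemma hd_inv {M : ℂ → Matrix (Fin n) (Fin n) ℂ}
    (h : ∀ i j, DifferentiableOn ℂ (fun ζ => M ζ i j) 𝔻)
    (hdet : ∀ ζ ∈ 𝔻, (M ζ).det ≠ 0) :
    ∀ i j, DifferentiableOn ℂ (fun ζ => (M ζ)⁻¹ i j) 𝔻 := by
  intro i j
  have : ∀ ζ, (M ζ)⁻¹ i j = ((M ζ).det)⁻¹ * (M ζ).adjugate i j := by
    intro ζ
    rw [Matrix.inv_def, Matrix.smul_apply, Ring.inverse_eq_inv', smul_eq_mul]
  simp only [this]
  exact ((hd_det h).inv hdet).mul (hd_adjugate h i j)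

lemma hd_aeval {M : ℂ → Matrix (Fin n) (Fin n) ℂ}
    (h : ∀ i j, DifferentiableOn ℂ (fun ζ => M ζ i j) 𝔻) (p : ℂ[X]) :
    ∀ i j, DifferentiableOn ℂ (fun ζ => (Polynomial.aeval (M ζ) p) i j) 𝔻 := by
  intro i j
  have : ∀ ζ, (Polynomial.aeval (M ζ) p) i j =
      ∑ k ∈ Finset.range (p.natDegree + 1), p.coeff k * (M ζ ^ k) i j := by
    intro ζ
    rw [Polynomial.aeval_eq_sum_range, Matrix.sum_apply]
    refine Finset.sum_congr rfl fun k _ => ?_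
    rw [Matrix.smul_apply, smul_eq_mul]
  simp only [this]
  exact DifferentiableOn.fun_sum fun k _ => ((hd_pow h k i j).const_mul _)

lemma charpoly_coeff_nnnorm_le (N : Matrix (Fin n) (Fin n) ℂ) {r : ℝ≥0}
    (hspec : ∀ α ∈ spectrum ℂ N, ‖α‖₊ ≤ r) {k : ℕ} (hkn : k ≤ n) :
    ‖N.charpoly.coeff (n - k)‖₊ ≤ (n.choose k : ℝ≥0) * r ^ k := by
  have hm := N.charpoly_monic
  have hsp : N.charpoly.Splits := IsAlgClosed.splits _
  have hdeg : N.charpoly.natDegree = n := N.charpoly_natDegree_eq_dim.trans (by simp)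
  have hcard : Multiset.card N.charpoly.roots = n := by
    rw [splits_iff_card_roots.mp hsp, hdeg]
  have hroots : ∀ μ ∈ N.charpoly.roots, ‖μ‖₊ ≤ r := by
    intro μ hμ
    exact hspec μ ((mem_spec_iff_root N μ).mpr ((mem_roots hm.ne_zero).mp hμ))
  have hrepr := hsp.eq_prod_roots_of_monic hm
  have hcoeff : N.charpoly.coeff (n - k) =
      (-1) ^ k * N.charpoly.roots.esymm k := by
    conv_lhs => rw [hrepr]
    rw [Multiset.prod_X_sub_C_coeff _ (by rw [hcard]; omega)]
    rw [hcard]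
    congr 2 <;> omega
  rw [hcoeff]
  have h1 : ‖(-1 : ℂ) ^ k * N.charpoly.roots.esymm k‖₊ = ‖N.charpoly.roots.esymm k‖₊ := by
    rw [nnnorm_mul, nnnorm_pow, nnnorm_neg, nnnorm_one, one_pow, one_mul]
  rw [h1, Multiset.esymm]
  calc ‖(Multiset.map Multiset.prod (N.charpoly.roots.powersetCard k)).sum‖₊
      ≤ ((Multiset.map Multiset.prod (N.charpoly.roots.powersetCard k)).map
          fun x => ‖x‖₊).sum := nnnorm_multiset_sum_le _
    _ ≤ (Multiset.card ((Multiset.map Multiset.prod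
          (N.charpoly.roots.powersetCard k)).map fun x => ‖x‖₊)) • (r ^ k) := by
        apply Multiset.sum_le_card_nsmul
        intro x hx
        rw [Multiset.mem_map] at hx
        obtain ⟨y, hy, rfl⟩ := hx
        rw [Multiset.mem_map] at hy
        obtain ⟨t, ht, rfl⟩ := hy
        rw [Multiset.mem_powersetCard] at ht
        have : ‖t.prod‖₊ = (t.map fun x => ‖x‖₊).prod :=
          (Multiset.prod_hom t (nnnormHom.toMonoidHom : ℂ →* ℝ≥0)).symm
        rw [this]
        calc (t.map fun x => ‖x‖₊).prod ≤ r ^ Multiset.card (t.map fun x => ‖x‖₊) := by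
              apply Multiset.prod_le_pow_card
              intro x hx
              rw [Multiset.mem_map] at hx
              obtain ⟨μ, hμ, rfl⟩ := hx
              exact hroots μ (Multiset.mem_of_le ht.1 hμ)
          _ = r ^ k := by rw [Multiset.card_map, ht.2]
    _ = (n.choose k : ℝ≥0) * r ^ k := by
        rw [Multiset.card_map, Multiset.card_map, Multiset.card_powersetCard, hcard,
          nsmul_eq_mul]

lemma spec_ratio (hn : 0 < n) {M : Matrix (Fin n) (Fin n) ℂ} {q Q : ℂ[X]}
    (hQ : IsUnit (Polynomial.aeval M Q)) (β : ℂ) :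
    β ∈ spectrum ℂ (Polynomial.aeval M q * (Polynomial.aeval M Q)⁻¹) ↔
      ∃ α ∈ spectrum ℂ M, q.eval α = β * Q.eval α := by
  set D := Polynomial.aeval M Q with hD
  have hdet : IsUnit D.det := (Matrix.isUnit_iff_isUnit_det D).mp hQ
  have hDD : D * D⁻¹ = 1 := Matrix.mul_nonsing_inv D hdet
  have hDinv : IsUnit D⁻¹ := ⟨⟨D⁻¹, D, Matrix.nonsing_inv_mul D hdet, Matrix.mul_nonsing_inv D hdet⟩, rfl⟩
  have key : algebraMap ℂ (Matrix (Fin n) (Fin n) ℂ) β - Polynomial.aeval M q * D⁻¹ =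
      (Polynomial.aeval M (C β * Q - q)) * D⁻¹ := by
    rw [map_sub, map_mul, aeval_C]
    rw [sub_mul, mul_assoc, hDD, mul_one]
  rw [spectrum.mem_iff, key]
  have hiff : IsUnit ((Polynomial.aeval M (C β * Q - q)) * D⁻¹) ↔
      IsUnit (Polynomial.aeval M (C β * Q - q)) := by
    conv_lhs => rw [← hDinv.unit_spec]
    exact Units.isUnit_mul_units _ hDinv.unit
  rw [hiff, ← spectrum.zero_mem_iff (R := ℂ)]
  rw [spectrum.map_polynomial_aeval_of_nonempty M (C β * Q - q) (spec_nonempty hn M)]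
  constructor
  · rintro ⟨α, hα, hev⟩
    refine ⟨α, hα, ?_⟩
    simp only [eval_sub, eval_mul, eval_C] at hev
    linear_combination -hev
  · rintro ⟨α, hα, hev⟩
    refine ⟨α, hα, ?_⟩
    simp only [eval_sub, eval_mul, eval_C]
    linear_combination -hev

lemma charpoly_coeff_norm_le (N : Matrix (Fin n) (Fin n) ℂ) {r : ℝ} (hr : 0 ≤ r)
    (hspec : ∀ α ∈ spectrum ℂ N, ‖α‖ ≤ r) {k : ℕ} (hkn : k ≤ n) :
    ‖N.charpoly.coeff (n - k)‖ ≤ (n.choose k : ℝ) * r ^ k := by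
  have hspec' : ∀ α ∈ spectrum ℂ N, ‖α‖₊ ≤ r.toNNReal := by
    intro α hα
    rw [← norm_toNNReal]
    exact Real.toNNReal_mono (hspec α hα)
  have h := charpoly_coeff_nnnorm_le N hspec' hkn
  have : ((‖N.charpoly.coeff (n - k)‖₊ : ℝ≥0) : ℝ) ≤
      (((n.choose k : ℝ≥0) * r.toNNReal ^ k : ℝ≥0) : ℝ) := by exact_mod_cast h
  simpa [Real.coe_toNNReal _ hr] using this

lemma key_bound (hn : 0 < n) {Gm : ℂ → Matrix (Fin n) (Fin n) ℂ}
    (hGd : ∀ i j, DifferentiableOn ℂ (fun ζ => Gm ζ i j) 𝔻)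
    (hG0 : Gm 0 = 0)
    (hGspec : ∀ ζ ∈ 𝔻, ∀ β ∈ spectrum ℂ (Gm ζ), ‖β‖ ≤ 1) :
    ∀ ζ ∈ 𝔻, ∀ β ∈ spectrum ℂ (Gm ζ), ‖β‖ ≤ ‖ζ‖ := by
  classical
  set Km : ℂ → Matrix (Fin n) (Fin n) ℂ :=
    fun ζ => Matrix.of fun i j => dslope (fun z => Gm z i j) 0 ζ with hKm
  have h0mem : (0:ℂ) ∈ 𝔻 := by simp
  have hKd : ∀ i j, DifferentiableOn ℂ (fun ζ => Km ζ i j) 𝔻 := by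
    intro i j
    exact (Complex.differentiableOn_dslope (isOpen_ball.mem_nhds h0mem)).mpr (hGd i j)
  have hGK : ∀ ζ, Gm ζ = ζ • Km ζ := by
    intro ζ
    ext i j
    rw [Matrix.smul_apply]
    by_cases hζ : ζ = 0
    · subst hζ
      simp [hG0]
    · rw [hKm]
      simp only [Matrix.of_apply]
      rw [dslope_of_ne _ hζ, slope_def_field]
      have : Gm 0 i j = 0 := by rw [hG0]; rfl
      rw [this]
      rw [smul_eq_mul]; field_simp; ring
  -- key coefficient bound
  have coeffB : ∀ m k : ℕ, 1 ≤ k → k ≤ n → ∀ ζ ∈ 𝔻,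
      ‖((Km ζ ^ m).charpoly).coeff (n - k)‖ ≤ (n.choose k : ℝ) := by
    intro m k hk1 hkn ζ1 hζ1
    set d : ℂ → ℂ := fun ζ => ((Km ζ ^ m).charpoly).coeff (n - k) with hdDef
    have hdd : DifferentiableOn ℂ d 𝔻 := hd_charpoly_coeff (hd_pow hKd m) _
    have hρbound : ∀ ρ : ℝ, max ‖ζ1‖ (1/2) < ρ → ρ < 1 → ‖d ζ1‖ ≤ (n.choose k : ℝ) * (1/ρ) ^ (m*k) := by
      intro ρ hρ1 hρ2
      have hρpos : 0 < ρ := lt_of_le_of_lt (by positivity) (lt_of_le_of_lt (le_max_right _ _) hρ1)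
      -- bound on the sphere
      have hsphere : ∀ w ∈ frontier (ball (0:ℂ) ρ), ‖d w‖ ≤ (n.choose k : ℝ) * (1/ρ) ^ (m*k) := by
        intro w hw
        rw [frontier_ball (0:ℂ) hρpos.ne'] at hw
        have hwn : ‖w‖ = ρ := by simpa using hw
        have hw0 : w ≠ 0 := by
          intro h; rw [h] at hwn; simp at hwn; exact hρpos.ne' hwn.symm
        have hwball : w ∈ 𝔻 := by
          rw [mem_ball_zero_iff, hwn]; exact hρ2
        -- spectrum of Km w
        have hKspec : ∀ ν ∈ spectrum ℂ (Km w), ‖ν‖ ≤ 1/ρ := by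
          intro ν hν
          have hsmul : w • ν ∈ spectrum ℂ (Gm w) := by
            rw [hGK w]
            have h2 : spectrum ℂ ((Units.mk0 w hw0 : ℂˣ) • Km w)
                = (Units.mk0 w hw0 : ℂˣ) • spectrum ℂ (Km w) :=
              spectrum.unit_smul_eq_smul _ _
            have h3 : w • ν ∈ (Units.mk0 w hw0 : ℂˣ) • spectrum ℂ (Km w) := ⟨ν, hν, rfl⟩
            have h4 : w • Km w = (Units.mk0 w hw0 : ℂˣ) • Km w := rfl
            rw [h4, h2]
            exact h3
          have := hGspec w hwball _ hsmul
          rw [smul_eq_mul, norm_mul, hwn] at this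
          rw [le_div_iff₀ hρpos, mul_comm]
          exact this
        -- spectrum of Km w ^ m
        have hKspecm : ∀ γ ∈ spectrum ℂ (Km w ^ m), ‖γ‖ ≤ (1/ρ) ^ m := by
          intro γ hγ
          have hpoly : (Km w) ^ m = Polynomial.aeval (Km w) (X ^ m : ℂ[X]) := by simp
          rw [hpoly, spectrum.map_polynomial_aeval_of_nonempty _ _ (spec_nonempty hn (Km w))] at hγ
          obtain ⟨ν, hν, rfl⟩ := hγ
          simp only [eval_pow, eval_X]
          rw [norm_pow]
          have h1 : (0:ℝ) ≤ ‖ν‖ := norm_nonneg _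
          exact pow_le_pow_left₀ h1 (hKspec ν hν) m
        have := charpoly_coeff_norm_le (Km w ^ m) (by positivity) hKspecm hkn
        calc ‖d w‖ ≤ (n.choose k : ℝ) * ((1/ρ) ^ m) ^ k := this
          _ = (n.choose k : ℝ) * (1/ρ) ^ (m*k) := by rw [← pow_mul]
      -- max modulus
      have hsub : closure (ball (0:ℂ) ρ) ⊆ 𝔻 := by
        rw [closure_ball (0:ℂ) hρpos.ne']
        exact closedBall_subset_ball hρ2
      have hdc : DiffContOnCl ℂ d (ball (0:ℂ) ρ) :=
        (hdd.mono hsub).diffContOnCl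
      exact Complex.norm_le_of_forall_mem_frontier_norm_le isBounded_ball hdc hsphere
        (subset_closure (by rw [mem_ball_zero_iff]; exact lt_of_le_of_lt (le_max_left _ _) hρ1))
    -- let ρ → 1
    have hlim : Filter.Tendsto (fun ρ : ℝ => (n.choose k : ℝ) * (1/ρ) ^ (m*k))
        (nhdsWithin 1 (Set.Iio 1)) (nhds ((n.choose k : ℝ))) := by
      have : Filter.Tendsto (fun ρ : ℝ => (n.choose k : ℝ) * (1/ρ) ^ (m*k))
          (nhds 1) (nhds ((n.choose k : ℝ) * (1/(1:ℝ)) ^ (m*k))) := by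
        apply Filter.Tendsto.const_mul
        apply Filter.Tendsto.pow
        exact (continuousAt_const.div continuousAt_id (by norm_num))
      simpa using this.mono_left nhdsWithin_le_nhds
    have hev : ∀ᶠ ρ in nhdsWithin (1:ℝ) (Set.Iio 1),
        ‖d ζ1‖ ≤ (n.choose k : ℝ) * (1/ρ) ^ (m*k) := by
      rw [mem_ball_zero_iff] at hζ1
      have hmax : max ‖ζ1‖ (1/2) < 1 := max_lt hζ1 (by norm_num)
      filter_upwards [Ioo_mem_nhdsLT_of_mem (Set.mem_Ioc.mpr ⟨hmax, le_refl _⟩)] with ρ hρ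
      exact hρbound ρ hρ.1 hρ.2
    exact ge_of_tendsto hlim hev
  -- spectrum of Km is in closed unit disc
  have specK : ∀ ζ ∈ 𝔻, ∀ ν ∈ spectrum ℂ (Km ζ), ‖ν‖ ≤ 1 := by
    intro ζ hζ ν hν
    set C : ℝ := ((n+1 : ℕ) ^ n : ℝ) with hC
    have hpowm : ∀ m : ℕ, ‖ν‖ ^ m ≤ max 1 (n * C) := by
      intro m
      have hmem : ν ^ m ∈ spectrum ℂ (Km ζ ^ m) := by
        have := spectrum.subset_polynomial_aeval (Km ζ) (X ^ m : ℂ[X])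
          ⟨ν, hν, rfl⟩
        simpa using this
      have hroot : (Km ζ ^ m).charpoly.IsRoot (ν ^ m) :=
        (mem_spec_iff_root _ _).mp hmem
      have hdeg : (Km ζ ^ m).charpoly.natDegree = n :=
        (Km ζ ^ m).charpoly_natDegree_eq_dim.trans (by simp)
      have hcoeffs : ∀ j < (Km ζ ^ m).charpoly.natDegree,
          ‖(Km ζ ^ m).charpoly.coeff j‖ ≤ C := by
        intro j hj
        rw [hdeg] at hj
        have hk1 : 1 ≤ n - j := by omega
        have hkn : n - j ≤ n := by omega
        have hjeq : j = n - (n - j) := by omega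
        rw [hjeq]
        refine le_trans (coeffB m (n - j) hk1 hkn ζ hζ) ?_
        rw [hC]
        have h1 : n.choose (n - j) ≤ (n+1) ^ n := by
          calc n.choose (n - j) ≤ n ^ (n - j) := Nat.choose_le_pow _ _
            _ ≤ (n+1) ^ (n - j) := Nat.pow_le_pow_left (by omega) _
            _ ≤ (n+1) ^ n := Nat.pow_le_pow_right (by omega) hkn
        exact_mod_cast h1
      have := root_norm_le (Km ζ ^ m).charpoly_monic hroot hcoeffs
      rw [hdeg] at this
      rw [← norm_pow]
      exact this
    by_contra hgt
    push_neg at hgt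
    obtain ⟨m, hm⟩ := pow_unbounded_of_one_lt (max 1 (n * C)) hgt
    exact absurd (hpowm m) (not_le.mpr hm)
  -- conclude
  intro ζ hζ β hβ
  by_cases hζ0 : ζ = 0
  · subst hζ0
    rw [hG0] at hβ
    haveI : Nonempty (Fin n) := ⟨⟨0, hn⟩⟩
    rw [spectrum.zero_eq] at hβ
    simp only [Set.mem_singleton_iff] at hβ
    simp [hβ]
  · rw [hGK ζ] at hβ
    have h4 : ζ • Km ζ = (Units.mk0 ζ hζ0 : ℂˣ) • Km ζ := rfl
    rw [h4, spectrum.unit_smul_eq_smul] at hβ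
    obtain ⟨ν, hν, rfl⟩ := hβ
    have := specK ζ hζ ν hν
    simp only [Units.val_mk0, smul_eq_mul, norm_mul]
    calc ‖ζ‖ * ‖ν‖ ≤ ‖ζ‖ * 1 := by
          exact mul_le_mul_of_nonneg_left this (norm_nonneg _)
      _ = ‖ζ‖ := mul_one _

lemma norm_msprod (s : Multiset ℂ) : ‖s.prod‖ = (s.map fun z => ‖z‖).prod := by
  induction s using Multiset.induction with
  | empty => simp
  | cons a s ih => simp [norm_mul, ih]

lemma spec_iff_minpoly_root (N : Matrix (Fin n) (Fin n) ℂ) (μ : ℂ) :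
    μ ∈ spectrum ℂ N ↔ (minpoly ℂ N).IsRoot μ := by
  let e := Matrix.toLinAlgEquiv (Pi.basisFun ℂ (Fin n))
  rw [← AlgEquiv.spectrum_eq e N, ← minpoly.algEquiv_eq e N,
    ← Module.End.hasEigenvalue_iff_mem_spectrum]
  exact Module.End.hasEigenvalue_iff_isRoot

end Stmt9Aux

open Stmt9Aux

/-- (Key Lemma) Let `F : 𝔻 → Ω_n` be holomorphic, and let `B` be the Blaschke product
whose zeros are the roots of the minimal polynomial of `F(0)` counted with their
multiplicities in the minimal polynomial. Then `|B(λ)| ≤ |ζ|` for every `ζ ∈ 𝔻` and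
every eigenvalue `λ` of `F(ζ)`. -/
theorem stmt9 {n : ℕ} (F : ℂ → Matrix (Fin n) (Fin n) ℂ)
    (hol : ∀ i j : Fin n, DifferentiableOn ℂ (fun ζ => F ζ i j) (ball (0 : ℂ) 1))
    (hmap : ∀ ζ ∈ ball (0 : ℂ) 1, sRad (F ζ) < 1)
    (B : ℂ → ℂ)
    (hB : ∀ ζ : ℂ, B ζ =
      (((minpoly ℂ (F 0)).roots).map fun μ => (ζ - μ) / (1 - (starRingEnd ℂ μ) * ζ)).prod) :
    ∀ ζ ∈ ball (0 : ℂ) 1, ∀ lam ∈ spectrum ℂ (F ζ), ‖B lam‖ ≤ ‖ζ‖ := by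
  intro ζ0 hζ0 lam hlam
  rcases Nat.eq_zero_or_pos n with hn0 | hn
  · exfalso
    subst hn0
    haveI : Subsingleton (Matrix (Fin 0) (Fin 0) ℂ) :=
      ⟨fun a b => by ext i j; exact i.elim0⟩
    exact (spectrum.mem_iff.mp hlam) (isUnit_of_subsingleton _)
  have h0mem : (0:ℂ) ∈ ball (0:ℂ) 1 := by simp
  set q : Polynomial ℂ := minpoly ℂ (F 0) with hq
  have hint : IsIntegral ℂ (F 0) := Algebra.IsIntegral.isIntegral _
  have hqm : q.Monic := minpoly.monic hint
  have hq0 : Polynomial.aeval (F 0) q = 0 := minpoly.aeval ℂ (F 0)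
  -- spectra are inside the unit disc
  have hspecnorm : ∀ ζ ∈ ball (0:ℂ) 1, ∀ α ∈ spectrum ℂ (F ζ), ‖α‖ < 1 := by
    intro ζ hζ α hα
    have hb : BddAbove ((fun μ => ‖μ‖) '' spectrum ℂ (F ζ)) :=
      ((Matrix.finite_spectrum _).image _).bddAbove
    exact lt_of_le_of_lt (le_csSup hb ⟨α, hα, rfl⟩) (hmap ζ hζ)
  have hroots_norm : ∀ μ ∈ q.roots, ‖μ‖ < 1 := by
    intro μ hμ
    refine hspecnorm 0 h0mem μ ?_
    rw [spec_iff_minpoly_root]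
    exact (mem_roots hqm.ne_zero).mp hμ
  set Q : Polynomial ℂ :=
    (q.roots.map fun μ => (1 : Polynomial ℂ) - Polynomial.C ((starRingEnd ℂ) μ) *
      Polynomial.X).prod with hQdef
  have hQeval : ∀ α : ℂ, Q.eval α = (q.roots.map fun μ => 1 - (starRingEnd ℂ) μ * α).prod := by
    intro α
    rw [hQdef, eval_multiset_prod, Multiset.map_map]
    congr 1
    apply Multiset.map_congr rfl
    intro μ _
    simp
  have hqeval : ∀ α : ℂ, q.eval α = (q.roots.map fun μ => α - μ).prod := by
    intro α
    conv_lhs => rw [(IsAlgClosed.splits q).eq_prod_roots_of_monic hqm]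
    rw [eval_multiset_prod, Multiset.map_map]
    congr 1
    apply Multiset.map_congr rfl
    intro μ _
    simp
  have hQne : ∀ α : ℂ, ‖α‖ < 1 → Q.eval α ≠ 0 := by
    intro α hα
    rw [hQeval]
    apply Multiset.prod_ne_zero
    intro h0
    rw [Multiset.mem_map] at h0
    obtain ⟨μ, hμ, heq⟩ := h0
    exact blaschke_denom_ne (hroots_norm μ hμ) hα heq
  have hBval : ∀ α : ℂ, B α = q.eval α / Q.eval α := by
    intro α
    rw [hB α, hqeval, hQeval, ← Multiset.prod_map_div]
  have hBnorm : ∀ α : ℂ, ‖α‖ < 1 → ‖q.eval α / Q.eval α‖ ≤ 1 := by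
    intro α hα
    rw [norm_div]
    apply div_le_one_of_le₀
    · have h1 : ‖q.eval α‖ = (q.roots.map fun μ => ‖α - μ‖).prod := by
        rw [hqeval, norm_msprod, Multiset.map_map]
        rfl
      have h2 : ‖Q.eval α‖ = (q.roots.map fun μ => ‖1 - (starRingEnd ℂ) μ * α‖).prod := by
        rw [hQeval, norm_msprod, Multiset.map_map]
        rfl
      rw [h1, h2]
      apply Multiset.prod_map_le_prod_map₀
      · intro μ _; exact norm_nonneg _
      · intro μ hμ; exact blaschke_num_le_denom (hroots_norm μ hμ) hα
    · exact norm_nonneg _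
  -- the matrix Blaschke function
  have hQunit : ∀ ζ ∈ ball (0:ℂ) 1, IsUnit (Polynomial.aeval (F ζ) Q) := by
    intro ζ hζ
    have h0 : (0:ℂ) ∉ spectrum ℂ (Polynomial.aeval (F ζ) Q) := by
      rw [spectrum.map_polynomial_aeval_of_nonempty _ _ (spec_nonempty hn _)]
      rintro ⟨α, hα, hev⟩
      exact hQne α (hspecnorm ζ hζ α hα) hev
    by_contra h
    exact h0 ((spectrum.zero_mem_iff (R := ℂ)).mpr h)
  set Gm : ℂ → Matrix (Fin n) (Fin n) ℂ :=
    fun ζ => Polynomial.aeval (F ζ) q * (Polynomial.aeval (F ζ) Q)⁻¹ with hGmdef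
  have hdet : ∀ ζ ∈ ball (0:ℂ) 1, (Polynomial.aeval (F ζ) Q).det ≠ 0 := by
    intro ζ hζ
    exact isUnit_iff_ne_zero.mp ((Matrix.isUnit_iff_isUnit_det _).mp (hQunit ζ hζ))
  have hGd : ∀ i j, DifferentiableOn ℂ (fun ζ => Gm ζ i j) (ball (0:ℂ) 1) := by
    intro i j
    simp only [hGmdef, Matrix.mul_apply]
    exact DifferentiableOn.fun_sum fun l _ =>
      (hd_aeval hol q i l).mul (hd_inv (hd_aeval hol Q) hdet l j)
  have hG0 : Gm 0 = 0 := by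
    show Polynomial.aeval (F 0) q * (Polynomial.aeval (F 0) Q)⁻¹ = 0
    rw [hq0, zero_mul]
  have hGspec_iff : ∀ ζ ∈ ball (0:ℂ) 1, ∀ β : ℂ, β ∈ spectrum ℂ (Gm ζ) ↔
      ∃ α ∈ spectrum ℂ (F ζ), q.eval α = β * Q.eval α := by
    intro ζ hζ β
    exact spec_ratio hn (hQunit ζ hζ) β
  have hGspec : ∀ ζ ∈ ball (0:ℂ) 1, ∀ β ∈ spectrum ℂ (Gm ζ), ‖β‖ ≤ 1 := by
    intro ζ hζ β hβ
    obtain ⟨α, hα, heq⟩ := (hGspec_iff ζ hζ β).mp hβ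
    have hαn := hspecnorm ζ hζ α hα
    have hβeq : β = q.eval α / Q.eval α := by
      rw [eq_div_iff (hQne α hαn)]
      linear_combination -heq
    rw [hβeq]
    exact hBnorm α hαn
  have hkey := key_bound hn hGd hG0 hGspec
  have hlamn := hspecnorm ζ0 hζ0 lam hlam
  have hmem : B lam ∈ spectrum ℂ (Gm ζ0) := by
    rw [hGspec_iff ζ0 hζ0]
    refine ⟨lam, hlam, ?_⟩
    rw [hBval lam, div_mul_cancel₀ _ (hQne lam hlamn)]
  exact hkey ζ0 hζ0 _ hmem
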